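/- Let H be a real symmetric positive definite n×n matrix and A a real m×n matrix with full row rank. Let S = A H⁻¹ Aᵀ, K = [[H, Aᵀ], [A, 0]], T = [[H, 0], [0, S]], and M = T⁻¹K. Then every eigenvalue λ of M (i.e., every scalar λ for which there exists a nonzero vector v with Mv = λv) belongs to the set {1, (1+√5)/2, (1−√5)/2}. -/

import Mathlib

open Matrix

/-- With `H` symmetric positive definite, `A` of full row rank, `S = A H⁻¹ Aᵀ`,
`K = [[H, Aᵀ],[A, 0]]`, `T = diag(H, S)` and `M = T⁻¹K`, every eigenvalue of `M`
belongs to `{1, (1+√5)/2, (1−√5)/2}`. -/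
theorem stmt_5 (n m : ℕ) (H : Matrix (Fin n) (Fin n) ℝ) (A : Matrix (Fin m) (Fin n) ℝ)
    (hHsymm : H.IsSymm) (hHpd : ∀ x : Fin n → ℝ, x ≠ 0 → 0 < x ⬝ᵥ (H *ᵥ x))
    (hrank : ∀ y : Fin m → ℝ, Aᵀ *ᵥ y = 0 → y = 0) :
    let S : Matrix (Fin m) (Fin m) ℝ := A * H⁻¹ * Aᵀ
    let K : Matrix (Fin n ⊕ Fin m) (Fin n ⊕ Fin m) ℝ :=
      Matrix.fromBlocks H Aᵀ A (0 : Matrix (Fin m) (Fin m) ℝ)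
    let T : Matrix (Fin n ⊕ Fin m) (Fin n ⊕ Fin m) ℝ :=
      Matrix.fromBlocks H 0 0 S
    let M : Matrix (Fin n ⊕ Fin m) (Fin n ⊕ Fin m) ℝ := T⁻¹ * K
    ∀ (lam : ℝ) (v : Fin n ⊕ Fin m → ℝ), v ≠ 0 → M *ᵥ v = lam • v →
      lam = 1 ∨ lam = (1 + Real.sqrt 5) / 2 ∨ lam = (1 - Real.sqrt 5) / 2 := by
  intro S K T M lam v hv hMv
  have hHpd' : H.PosDef := by
    refine Matrix.posDef_iff_dotProduct_mulVec.mpr ⟨?_, fun x hx => ?_⟩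
    · rw [Matrix.IsHermitian, conjTranspose_eq_transpose_of_trivial]; exact hHsymm
    · simpa [star_trivial] using hHpd x hx
  have hHdet : IsUnit H.det := (Matrix.isUnit_iff_isUnit_det H).mp hHpd'.isUnit
  have hHinvpd : H⁻¹.PosDef := hHpd'.inv
  have hSmul : ∀ y : Fin m → ℝ, S *ᵥ y = A *ᵥ (H⁻¹ *ᵥ (Aᵀ *ᵥ y)) := by
    intro y
    show (A * H⁻¹ * Aᵀ) *ᵥ y = _
    rw [← mulVec_mulVec, ← mulVec_mulVec]
  have hSy : ∀ y : Fin m → ℝ, y ≠ 0 → S *ᵥ y ≠ 0 := by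
    intro y hy hSy0
    have hATy : Aᵀ *ᵥ y ≠ 0 := fun h => hy (hrank y h)
    have hpos : 0 < (Aᵀ *ᵥ y) ⬝ᵥ (H⁻¹ *ᵥ (Aᵀ *ᵥ y)) := by
      simpa [star_trivial] using hHinvpd.dotProduct_mulVec_pos hATy
    have heq : y ⬝ᵥ (S *ᵥ y) = (Aᵀ *ᵥ y) ⬝ᵥ (H⁻¹ *ᵥ (Aᵀ *ᵥ y)) := by
      rw [hSmul, dotProduct_mulVec y A, ← mulVec_transpose]
    rw [hSy0, dotProduct_zero] at heq
    exact hpos.ne' heq.symm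
  have hSdet : IsUnit S.det := by
    rcases eq_or_ne S.det 0 with h0 | h0
    · obtain ⟨y, hyne, hy0⟩ := (Matrix.exists_mulVec_eq_zero_iff).mpr h0
      exact absurd hy0 (hSy y hyne)
    · exact h0.isUnit
  have hTdet : IsUnit T.det := by
    have : T.det = H.det * S.det := Matrix.det_fromBlocks_zero₂₁ H 0 S
    rw [this]; exact hHdet.mul hSdet
  have hKv : K *ᵥ v = lam • (T *ᵥ v) := by
    have hTM : T * M = K := by
      show T * (T⁻¹ * K) = K
      rw [← Matrix.mul_assoc, Matrix.mul_nonsing_inv T hTdet, Matrix.one_mul]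
    calc K *ᵥ v = (T * M) *ᵥ v := by rw [hTM]
      _ = T *ᵥ (M *ᵥ v) := by rw [← mulVec_mulVec]
      _ = T *ᵥ (lam • v) := by rw [hMv]
      _ = lam • (T *ᵥ v) := by rw [mulVec_smul]
  set x : Fin n → ℝ := v ∘ Sum.inl with hxdef
  set y : Fin m → ℝ := v ∘ Sum.inr with hydef
  have hvxy : v = Sum.elim x y := by funext i; cases i <;> rfl
  rw [hvxy, show K = fromBlocks H Aᵀ A 0 from rfl, show T = fromBlocks H 0 0 S from rfl,
    fromBlocks_mulVec, fromBlocks_mulVec] at hKv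
  simp only [Sum.elim_comp_inl, Sum.elim_comp_inr, Matrix.zero_mulVec, add_zero, zero_add] at hKv
  have h1 : H *ᵥ x + Aᵀ *ᵥ y = lam • (H *ᵥ x) := by
    funext i
    simpa using congrFun hKv (Sum.inl i)
  have h2 : A *ᵥ x = lam • (S *ᵥ y) := by
    funext i
    simpa using congrFun hKv (Sum.inr i)
  by_cases hy0 : y = 0
  · left
    have hx0 : x ≠ 0 := by
      intro hx0
      apply hv
      rw [hvxy, hx0, hy0]
      funext i; cases i <;> rfl
    have hHx : H *ᵥ x ≠ 0 := by
      intro h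
      have := hHpd x hx0
      rw [h, dotProduct_zero] at this
      exact lt_irrefl 0 this
    rw [hy0, mulVec_zero, add_zero] at h1
    have hz : (lam - 1) • (H *ᵥ x) = 0 := by
      rw [sub_smul, one_smul, ← h1, sub_self]
    rcases smul_eq_zero.mp hz with h | h
    · linarith [h]
    · exact absurd h hHx
  · right
    have hSyne : S *ᵥ y ≠ 0 := hSy y hy0
    have hAty : Aᵀ *ᵥ y = (lam - 1) • (H *ᵥ x) := by
      rw [sub_smul, one_smul, ← h1, add_sub_cancel_left]
    have hinvHx : H⁻¹ *ᵥ (H *ᵥ x) = x := by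
      rw [mulVec_mulVec, Matrix.nonsing_inv_mul H hHdet, one_mulVec]
    have hSyAx : S *ᵥ y = (lam - 1) • (A *ᵥ x) := by
      rw [hSmul, hAty, mulVec_smul, hinvHx, mulVec_smul]
    rw [h2, smul_smul] at hSyAx
    have hz : ((lam - 1) * lam - 1) • (S *ᵥ y) = 0 := by
      rw [sub_smul, one_smul, ← hSyAx, sub_self]
    rcases smul_eq_zero.mp hz with h | h
    · have hquad : lam * (lam - 1) = 1 := by nlinarith [h]
      have h5 : Real.sqrt 5 ^ 2 = 5 := Real.sq_sqrt (by norm_num)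
      have hfac : (lam - (1 + Real.sqrt 5) / 2) * (lam - (1 - Real.sqrt 5) / 2) = 0 := by
        nlinarith [hquad, h5]
      rcases mul_eq_zero.mp hfac with h' | h'
      · exact Or.inl (by linarith [sub_eq_zero.mp h'])
      · exact Or.inr (by linarith [sub_eq_zero.mp h'])
    · exact absurd h hSyne
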